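/- Let f be a nonconstant analytic function on an open connected set G and suppose the level set λ = {z ∈ G : |f(z)| = ε} (ε > 0) is compact and contained in G together with all bounded components of its complement. If f' ≠ 0 at every point of λ, then λ is a disjoint union of finitely many smooth Jordan curves. -/

import Mathlib

open Set Complex Filter

namespace RegLevelAux

/-- A local chart for `f` near a point `p`. -/
structure Chart (f : ℂ → ℂ) (G : Set ℂ) (p : ℂ) where
  U : Set ℂ
  V : Set ℂ
  g : ℂ → ℂ
  openU : IsOpen U
  openV : IsOpen V
  memU : p ∈ U
  subG : U ⊆ G
  mapsf : Set.MapsTo f U V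
  left_inv : ∀ z ∈ U, g (f z) = z
  right_inv : ∀ w ∈ V, f (g w) = w
  mapsg : Set.MapsTo g V U
  anal : ∀ w ∈ V, AnalyticAt ℂ g w
  dg : ∀ w ∈ V, deriv (g) w ≠ 0

lemma exists_chart {f : ℂ → ℂ} {G : Set ℂ} (hG : IsOpen G) (hf : AnalyticOnNhd ℂ f G)
    {p : ℂ} (hp : p ∈ G) (hd : deriv f p ≠ 0) : Nonempty (Chart f G p) := by
  classical
  -- the open set where deriv f ≠ 0
  have hdercont : ContinuousOn (deriv f) G := (hf.deriv).continuousOn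
  have hO : IsOpen {z ∈ G | deriv f z ≠ 0} := by
    have h := hdercont.isOpen_inter_preimage hG (isOpen_compl_singleton : IsOpen ({(0:ℂ)}ᶜ))
    have heq : {z ∈ G | deriv f z ≠ 0} = G ∩ deriv f ⁻¹' {(0:ℂ)}ᶜ := by
      ext z; simp [Set.mem_setOf_eq]
    rw [heq]; exact h
  set O : Set ℂ := {z ∈ G | deriv f z ≠ 0} with hOdef
  have hpO : p ∈ O := ⟨hp, hd⟩
  have hOG : O ⊆ G := fun z hz => hz.1
  -- strict derivative
  have hs : HasStrictDerivAt f (deriv f p) p := by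
    obtain ⟨ps, hps⟩ := hf p hp
    have h1 := hps.hasStrictDerivAt
    have h2 : deriv f p = ps.coeff 1 := by
      simpa using hps.hasDerivAt.deriv
    rw [h2]; exact h1
  set e := HasStrictFDerivAt.toOpenPartialHomeomorph f (hs.hasStrictFDerivAt_equiv hd) with he
  have hcoe : (e : ℂ → ℂ) = f := HasStrictFDerivAt.toOpenPartialHomeomorph_coe (hs.hasStrictFDerivAt_equiv hd)
  have hpsrc : p ∈ e.source := HasStrictFDerivAt.mem_toOpenPartialHomeomorph_source (hs.hasStrictFDerivAt_equiv hd)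
  set U0 : Set ℂ := e.source ∩ O with hU0
  have hU0open : IsOpen U0 := e.open_source.inter hO
  set V : Set ℂ := e.target ∩ e.symm ⁻¹' U0 with hV
  have hVopen : IsOpen V := e.isOpen_inter_preimage_symm hU0open
  set U : Set ℂ := (e.source ∩ f ⁻¹' V) ∩ O with hU
  have hUopen : IsOpen U := by
    have := e.isOpen_inter_preimage hVopen
    rw [hcoe] at this
    exact this.inter hO
  have hfpV : f p ∈ V := by
    constructor
    · rw [← hcoe]; exact e.map_source hpsrc
    · have : e.symm (f p) = p := by rw [← hcoe]; exact e.left_inv hpsrc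
      simp only [Set.mem_preimage, this]
      exact ⟨hpsrc, hpO⟩
  have hpU : p ∈ U := ⟨⟨hpsrc, hfpV⟩, hpO⟩
  have hleft : ∀ z ∈ U, e.symm (f z) = z := by
    intro z hz
    rw [← hcoe]; exact e.left_inv hz.1.1
  have hright : ∀ w ∈ V, f (e.symm w) = w := by
    intro w hw
    rw [← hcoe]; exact e.right_inv hw.1
  have hmapsg : Set.MapsTo e.symm V U := by
    intro w hw
    have h1 : e.symm w ∈ U0 := hw.2
    refine ⟨⟨h1.1, ?_⟩, h1.2⟩
    simp only [Set.mem_preimage]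
    rw [hright w hw]; exact hw
  have hUG : U ⊆ G := fun z hz => hOG hz.2
  -- analyticity of inverse
  have hdiff : ∀ w ∈ V, HasStrictDerivAt e.symm (deriv f (e.symm w))⁻¹ w := by
    intro w hw
    have hz : e.symm w ∈ U := hmapsg hw
    have hzG : e.symm w ∈ G := hUG hz
    have hzO : deriv f (e.symm w) ≠ 0 := hz.2.2
    have hsz : HasStrictDerivAt f (deriv f (e.symm w)) (e.symm w) := by
      obtain ⟨ps, hps⟩ := hf _ hzG
      have h1 := hps.hasStrictDerivAt
      have h2 : deriv f (e.symm w) = ps.coeff 1 := by simpa using hps.hasDerivAt.deriv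
      rw [h2]; exact h1
    have hev : ∀ᶠ x in nhds (e.symm w), e.symm (f x) = x := by
      filter_upwards [hUopen.mem_nhds hz] with x hx
      exact hleft x hx
    have := hsz.to_local_left_inverse hzO hev
    rwa [hright w hw] at this
  have hanal : ∀ w ∈ V, AnalyticAt ℂ e.symm w := by
    have hdo : DifferentiableOn ℂ e.symm V := fun w hw =>
      (HasStrictDerivAt.hasDerivAt (hdiff w hw)).differentiableAt.differentiableWithinAt
    exact fun w hw => hdo.analyticOnNhd hVopen w hw
  have hdg : ∀ w ∈ V, deriv e.symm w ≠ 0 := by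
    intro w hw
    have := (HasStrictDerivAt.hasDerivAt (hdiff w hw)).deriv
    rw [this]
    exact inv_ne_zero (hmapsg hw).2.2
  exact ⟨⟨U, V, e.symm, hUopen, hVopen, hpU, hUG, fun z hz => hz.1.2, hleft, hright, hmapsg,
    hanal, hdg⟩⟩


/-- A finite atlas of charts covering `lam`. -/
structure Atlas (f : ℂ → ℂ) (G lam : Set ℂ) where
  k : ℕ
  p : Fin k → ℂ
  C : ∀ i, Chart f G (p i)
  r : Fin k → ℝ
  rpos : ∀ i, 0 < r i
  ball_sub : ∀ i, Metric.ball (f (p i)) (r i) ⊆ (C i).V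
  cover : lam ⊆ ⋃ i, ((C i).U ∩ f ⁻¹' Metric.ball (f (p i)) (r i / 2))

variable {f : ℂ → ℂ} {G lam : Set ℂ}

def Atlas.W (A : Atlas f G lam) (i : Fin A.k) : Set ℂ :=
  (A.C i).U ∩ f ⁻¹' Metric.ball (f (A.p i)) (A.r i / 2)

lemma Atlas.mem_chart (A : Atlas f G lam) {z : ℂ} (hz : z ∈ lam) : ∃ i, z ∈ A.W i := by
  have := A.cover hz
  simpa only [Set.mem_iUnion, Atlas.W] using this

lemma exists_atlas (hG : IsOpen G) (hf : AnalyticOnNhd ℂ f G)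
    (hsub : lam ⊆ G) (hcpt : IsCompact lam)
    (hreg : ∀ z ∈ lam, deriv f z ≠ 0) : Nonempty (Atlas f G lam) := by
  classical
  have hch : ∀ z : lam, Nonempty (Chart f G (z : ℂ)) := fun z =>
    exists_chart hG hf (hsub z.2) (hreg z z.2)
  let ch : ∀ z : lam, Chart f G (z : ℂ) := fun z => (hch z).some
  have hfV : ∀ z : lam, f z ∈ (ch z).V := fun z => (ch z).mapsf (ch z).memU
  choose r hrpos hrsub using fun z : lam => Metric.isOpen_iff.mp (ch z).openV _ (hfV z)
  set W : lam → Set ℂ := fun z => (ch z).U ∩ f ⁻¹' Metric.ball (f z) (r z / 2) with hW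
  have hWopen : ∀ z, IsOpen (W z) := by
    intro z
    exact (hf.continuousOn.mono (ch z).subG).isOpen_inter_preimage (ch z).openU
      Metric.isOpen_ball
  have hWcover : lam ⊆ ⋃ z : lam, W z := by
    intro z hz
    exact Set.mem_iUnion.2 ⟨⟨z, hz⟩, (ch ⟨z, hz⟩).memU,
      by simp [Metric.mem_ball, half_pos (hrpos ⟨z, hz⟩)]⟩
  obtain ⟨t, ht⟩ := hcpt.elim_finite_subcover W hWopen hWcover
  let e := t.equivFin
  refine ⟨⟨t.card, fun i => ((e.symm i : lam) : ℂ), fun i => ch (e.symm i),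
    fun i => r (e.symm i), fun i => hrpos (e.symm i), fun i => hrsub (e.symm i), ?_⟩⟩
  intro z hz
  obtain ⟨x, hxt, hzx⟩ := by
    simpa only [Set.mem_iUnion, exists_prop] using ht hz
  refine Set.mem_iUnion.2 ⟨e ⟨x, hxt⟩, ?_⟩
  have hee : ((e.symm (e ⟨x, hxt⟩) : t) : lam) = x := by
    rw [Equiv.symm_apply_apply]
  rw [hee]
  exact hzx


/-- `γ` is a lift on `s` of the circle `t ↦ w · e^{it}` through the level set. -/
def IsLiftOn (f : ℂ → ℂ) (lam : Set ℂ) (w : ℂ) (γ : ℝ → ℂ) (s : Set ℝ) : Prop :=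
  ContinuousOn γ s ∧ ∀ t ∈ s, γ t ∈ lam ∧ f (γ t) = w * Complex.exp (Complex.I * t)

lemma lift_unique (A : Atlas f G lam) {s : Set ℝ} (hs : IsPreconnected s) {w : ℂ}
    {γ1 γ2 : ℝ → ℂ} (h1 : IsLiftOn f lam w γ1 s) (h2 : IsLiftOn f lam w γ2 s)
    {t0 : ℝ} (ht0 : t0 ∈ s) (heq : γ1 t0 = γ2 t0) : Set.EqOn γ1 γ2 s := by
  haveI : PreconnectedSpace s := Subtype.preconnectedSpace hs
  set E : Set s := {x | γ1 (x : ℝ) = γ2 (x : ℝ)} with hE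
  have hEclosed : IsClosed E := isClosed_eq h1.1.restrict h2.1.restrict
  have hEopen : IsOpen E := by
    rw [isOpen_iff_mem_nhds]
    intro x hx
    have hxlam : γ1 (x : ℝ) ∈ lam := (h1.2 x x.2).1
    obtain ⟨i, hiW⟩ := A.mem_chart hxlam
    have hiU : γ1 (x : ℝ) ∈ (A.C i).U := hiW.1
    have hc1 : ContinuousWithinAt γ1 s (x : ℝ) := h1.1 x x.2
    have hc2 : ContinuousWithinAt γ2 s (x : ℝ) := h2.1 x x.2
    have hm1 : {t : ℝ | γ1 t ∈ (A.C i).U} ∈ nhdsWithin (x : ℝ) s :=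
      hc1 ((A.C i).openU.mem_nhds hiU)
    have hm2 : {t : ℝ | γ2 t ∈ (A.C i).U} ∈ nhdsWithin (x : ℝ) s := by
      apply hc2
      rw [← hx]
      exact (A.C i).openU.mem_nhds hiU
    have hmem : {t : ℝ | γ1 t ∈ (A.C i).U ∧ γ2 t ∈ (A.C i).U} ∈ nhdsWithin (x : ℝ) s :=
      Filter.inter_mem hm1 hm2
    rw [nhdsWithin_eq_map_subtype_coe x.2, Filter.mem_map] at hmem
    filter_upwards [hmem] with y hy
    have hfy : f (γ1 (y : ℝ)) = f (γ2 (y : ℝ)) := by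
      rw [(h1.2 y y.2).2, (h2.2 y y.2).2]
    have e1 : (A.C i).g (f (γ1 (y : ℝ))) = γ1 (y : ℝ) := (A.C i).left_inv _ hy.1
    have e2 : (A.C i).g (f (γ2 (y : ℝ))) = γ2 (y : ℝ) := (A.C i).left_inv _ hy.2
    show γ1 (y : ℝ) = γ2 (y : ℝ)
    rw [← e1, ← e2, hfy]
  have hEne : E.Nonempty := ⟨⟨t0, ht0⟩, heq⟩
  have : E = Set.univ := by
    rcases isClopen_iff.mp ⟨hEclosed, hEopen⟩ with h | h
    · exact absurd h hEne.ne_empty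
    · exact h
  intro t ht
  have : (⟨t, ht⟩ : s) ∈ E := this ▸ Set.mem_univ _
  exact this


lemma continuousOn_union_closed {α β : Type*} [TopologicalSpace α] [TopologicalSpace β]
    {g : α → β} {s t : Set α} (hs : IsClosed s) (ht : IsClosed t)
    (hg1 : ContinuousOn g s) (hg2 : ContinuousOn g t) : ContinuousOn g (s ∪ t) := by
  intro x hx
  rcases hx with h | h
  · refine (hg1 x h).union ?_
    by_cases hxt : x ∈ t
    · exact hg2 x hxt
    · exact continuousWithinAt_of_notMem_closure (by rwa [ht.closure_eq])
  · refine ContinuousWithinAt.union ?_ (hg2 x h)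
    by_cases hxs : x ∈ s
    · exact hg1 x hxs
    · exact continuousWithinAt_of_notMem_closure (by rwa [hs.closure_eq])

lemma norm_circ (w : ℂ) (t : ℝ) : ‖w * Complex.exp (Complex.I * t)‖ = ‖w‖ := by
  rw [norm_mul]
  have : ‖Complex.exp (Complex.I * t)‖ = 1 := by
    rw [Complex.norm_exp]
    simp
  rw [this, mul_one]

lemma circ_est {w : ℂ} {t T : ℝ} (h : |t - T| ≤ 1) :
    ‖w * Complex.exp (Complex.I * t) - w * Complex.exp (Complex.I * T)‖
      ≤ 2 * ‖w‖ * |t - T| := by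
  have key : Complex.exp (Complex.I * t)
      = Complex.exp (Complex.I * T) * Complex.exp (Complex.I * ((t : ℂ) - T)) := by
    rw [← Complex.exp_add]
    congr 1
    ring
  have heq : w * Complex.exp (Complex.I * t) - w * Complex.exp (Complex.I * T)
      = (w * Complex.exp (Complex.I * T)) * (Complex.exp (Complex.I * ((t : ℂ) - T)) - 1) := by
    rw [key]; ring
  rw [heq, norm_mul, norm_circ]
  have habs : ‖Complex.I * ((t : ℂ) - T)‖ = |t - T| := by
    rw [norm_mul, Complex.norm_I, one_mul]
    rw [← Complex.ofReal_sub, Complex.norm_real, Real.norm_eq_abs]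
  have hle : ‖Complex.I * ((t : ℂ) - T)‖ ≤ 1 := by rw [habs]; exact h
  have := Complex.norm_exp_sub_one_le hle
  rw [habs] at this
  calc ‖w‖ * ‖Complex.exp (Complex.I * ((t : ℂ) - T)) - 1‖
      ≤ ‖w‖ * (2 * |t - T|) := by
        apply mul_le_mul_of_nonneg_left _ (norm_nonneg w)
        exact this
    _ = 2 * ‖w‖ * |t - T| := by ring


lemma extend_at (A : Atlas f G lam) {ε : ℝ} (hε : 0 < ε)
    (hlam : lam = {z ∈ G | ‖f z‖ = ε})
    {η : ℝ} (hη0 : 0 < η) (hη1 : η ≤ 1) (hηr : ∀ i, 2 * ε * η ≤ A.r i / 2)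
    {w : ℂ} (hwn : ‖w‖ = ε) {T : ℝ} {p : ℂ}
    (hp : p ∈ lam) (hfp : f p = w * Complex.exp (Complex.I * T)) :
    ∃ δ : ℝ → ℂ, IsLiftOn f lam w δ (Set.Icc (T - η) (T + η)) ∧ δ T = p := by
  obtain ⟨i, hiW⟩ := A.mem_chart hp
  set g := (A.C i).g with hg
  refine ⟨fun t => g (w * Complex.exp (Complex.I * t)), ?_, ?_⟩
  · have hball : ∀ t ∈ Set.Icc (T - η) (T + η),
        w * Complex.exp (Complex.I * t) ∈ Metric.ball (f (A.p i)) (A.r i) := by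
      intro t ht
      have htT : |t - T| ≤ η := by
        rw [abs_le]
        constructor <;> [linarith [ht.1]; linarith [ht.2]]
      have h1 : ‖w * Complex.exp (Complex.I * t) - f p‖ ≤ 2 * ε * η := by
        rw [hfp, ← hwn]
        calc ‖w * Complex.exp (Complex.I * t) - w * Complex.exp (Complex.I * T)‖
            ≤ 2 * ‖w‖ * |t - T| := circ_est (le_trans htT hη1)
          _ ≤ 2 * ‖w‖ * η := by
              apply mul_le_mul_of_nonneg_left htT
              positivity
      have h2 : ‖f p - f (A.p i)‖ < A.r i / 2 := by
        have := hiW.2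
        rwa [Set.mem_preimage, Metric.mem_ball, dist_eq_norm] at this
      rw [Metric.mem_ball, dist_eq_norm]
      calc ‖w * Complex.exp (Complex.I * t) - f (A.p i)‖
          ≤ ‖w * Complex.exp (Complex.I * t) - f p‖ + ‖f p - f (A.p i)‖ := by
            have := norm_sub_le_norm_sub_add_norm_sub
              (w * Complex.exp (Complex.I * t)) (f p) (f (A.p i))
            exact this
        _ < 2 * ε * η + A.r i / 2 := by linarith
        _ ≤ A.r i / 2 + A.r i / 2 := by linarith [hηr i]
        _ = A.r i := by ring
    have hmemV : ∀ t ∈ Set.Icc (T - η) (T + η),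
        w * Complex.exp (Complex.I * t) ∈ (A.C i).V := fun t ht =>
      A.ball_sub i (hball t ht)
    constructor
    · intro t ht
      have hc : Continuous fun t : ℝ => w * Complex.exp (Complex.I * t) := by
        continuity
      have h1 : ContinuousAt g (w * Complex.exp (Complex.I * t)) :=
        ((A.C i).anal _ (hmemV t ht)).continuousAt
      have h2 : ContinuousAt (g ∘ fun s : ℝ => w * Complex.exp (Complex.I * s)) t :=
        ContinuousAt.comp (x := t) h1 hc.continuousAt
      exact h2.continuousWithinAt
    · intro t ht
      have hV := hmemV t ht
      have hU : g (w * Complex.exp (Complex.I * t)) ∈ (A.C i).U := (A.C i).mapsg hV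
      have hfeq : f (g (w * Complex.exp (Complex.I * t))) = w * Complex.exp (Complex.I * t) :=
        (A.C i).right_inv _ hV
      refine ⟨?_, hfeq⟩
      rw [hlam]
      refine ⟨(A.C i).subG hU, ?_⟩
      rw [hfeq, norm_circ, hwn]
  · show g (w * Complex.exp (Complex.I * T)) = p
    rw [← hfp]
    exact (A.C i).left_inv p hiW.1


lemma IsLiftOn.mono {w : ℂ} {γ : ℝ → ℂ} {s t : Set ℝ} (h : IsLiftOn f lam w γ s)
    (hts : t ⊆ s) : IsLiftOn f lam w γ t :=
  ⟨h.1.mono hts, fun u hu => h.2 u (hts hu)⟩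

lemma lift_exists (A : Atlas f G lam) {ε : ℝ} (hε : 0 < ε)
    (hlam : lam = {z ∈ G | ‖f z‖ = ε})
    {z0 : ℂ} (hz0 : z0 ∈ lam) :
    ∃ γ : ℝ → ℂ, Continuous γ ∧ γ 0 = z0 ∧
      ∀ t, γ t ∈ lam ∧ f (γ t) = f z0 * Complex.exp (Complex.I * t) := by
  classical
  obtain ⟨i0, -⟩ := A.mem_chart hz0
  haveI : Nonempty (Fin A.k) := ⟨i0⟩
  set rmin : ℝ := Finset.univ.inf' Finset.univ_nonempty (fun i => A.r i) with hrmin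
  have hrminpos : 0 < rmin := by
    rw [hrmin, Finset.lt_inf'_iff]
    exact fun i _ => A.rpos i
  set η : ℝ := min 1 (rmin / (8 * (ε + 1))) with hηdef
  have hη0 : 0 < η := lt_min one_pos (by positivity)
  have hη1 : η ≤ 1 := min_le_left _ _
  have hηc : η * (8 * (ε + 1)) ≤ rmin := by
    have h1 : η ≤ rmin / (8 * (ε + 1)) := min_le_right _ _
    have h2 : (0:ℝ) < 8 * (ε + 1) := by positivity
    calc η * (8 * (ε + 1)) ≤ rmin / (8 * (ε + 1)) * (8 * (ε + 1)) :=
          mul_le_mul_of_nonneg_right h1 h2.le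
      _ = rmin := div_mul_cancel₀ _ h2.ne'
  have hηr : ∀ i, 2 * ε * η ≤ A.r i / 2 := by
    intro i
    have h3 : rmin ≤ A.r i := Finset.inf'_le _ (Finset.mem_univ i)
    nlinarith [hη0.le, hε.le, mul_nonneg hε.le hη0.le]
  have hw0n : ‖f z0‖ = ε := by
    rw [hlam] at hz0; exact hz0.2
  -- main induction
  have main : ∀ n : ℕ, ∃ γ : ℝ → ℂ,
      IsLiftOn f lam (f z0) γ (Set.Icc (-((n:ℝ) * η)) ((n:ℝ) * η)) ∧ γ 0 = z0 := by
    intro n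
    induction n with
    | zero =>
      refine ⟨fun _ => z0, ⟨continuousOn_const, ?_⟩, rfl⟩
      intro t ht
      simp only [Nat.cast_zero, zero_mul, neg_zero, Set.mem_Icc] at ht
      have ht0 : t = 0 := le_antisymm ht.2 ht.1
      subst ht0
      refine ⟨hz0, ?_⟩
      norm_num
    | succ n ih =>
      obtain ⟨γn, hγn, hγn0⟩ := ih
      set a : ℝ := (n:ℝ) * η with ha
      have ha0 : 0 ≤ a := by positivity
      have hmema : a ∈ Set.Icc (-a) a := ⟨by linarith, le_refl a⟩
      have hmemna : -a ∈ Set.Icc (-a) a := ⟨le_refl _, by linarith⟩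
      obtain ⟨δR, hδR, hδRa⟩ := extend_at A hε hlam hη0 hη1 hηr hw0n
        (hγn.2 a hmema).1 (hγn.2 a hmema).2
      obtain ⟨δL, hδL, hδLa⟩ := extend_at A hε hlam hη0 hη1 hηr hw0n
        (hγn.2 (-a) hmemna).1 (hγn.2 (-a) hmemna).2
      set γ' : ℝ → ℂ := fun t => if t < -a then δL t else if t ≤ a then γn t else δR t
        with hγ'def
      have hEL : Set.EqOn γ' δL (Set.Icc (-(a+η)) (-a)) := by
        intro t ht
        show (if t < -a then δL t else if t ≤ a then γn t else δR t) = δL t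
        by_cases h : t < -a
        · rw [if_pos h]
        · have hta : t = -a := le_antisymm ht.2 (not_lt.1 h)
          subst hta
          rw [if_neg h, if_pos (by linarith : -a ≤ a), hδLa]
      have hEM : Set.EqOn γ' γn (Set.Icc (-a) a) := by
        intro t ht
        show (if t < -a then δL t else if t ≤ a then γn t else δR t) = γn t
        rw [if_neg (not_lt.2 ht.1), if_pos ht.2]
      have hER : Set.EqOn γ' δR (Set.Icc a (a+η)) := by
        intro t ht
        show (if t < -a then δL t else if t ≤ a then γn t else δR t) = δR t
        by_cases h : t ≤ a
        · have hta : t = a := le_antisymm h ht.1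
          subst hta
          rw [if_neg (not_lt.2 (by linarith : -a ≤ a)), if_pos h, hδRa]
        · push_neg at h
          rw [if_neg (by intro hc; linarith : ¬ t < -a), if_neg (not_le.2 h)]
      have hIcc : Set.Icc (-(((n:ℝ)+1) * η)) (((n:ℝ)+1) * η)
          = Set.Icc (-(a+η)) (-a) ∪ (Set.Icc (-a) a ∪ Set.Icc a (a+η)) := by
        rw [Set.Icc_union_Icc_eq_Icc (by linarith) (by linarith),
          Set.Icc_union_Icc_eq_Icc (by linarith) (by linarith)]
        congr 1 <;> ring
      have hsubL : Set.Icc (-(a+η)) (-a) ⊆ Set.Icc (-a - η) (-a + η) :=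
        Set.Icc_subset_Icc (by linarith) (by linarith)
      have hsubR : Set.Icc a (a+η) ⊆ Set.Icc (a - η) (a + η) :=
        Set.Icc_subset_Icc (by linarith) (by linarith)
      refine ⟨γ', ⟨?_, ?_⟩, ?_⟩
      · -- continuity
        push_cast
        rw [hIcc]
        apply continuousOn_union_closed isClosed_Icc (isClosed_Icc.union isClosed_Icc)
        · exact ((hδL.1.mono hsubL).congr hEL)
        · apply continuousOn_union_closed isClosed_Icc isClosed_Icc
          · exact (hγn.1.congr hEM)
          · exact ((hδR.1.mono hsubR).congr hER)
      · -- pointwise properties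
        intro t ht
        push_cast at ht
        rw [hIcc] at ht
        rcases ht with h | h | h
        · rw [hEL h]; exact hδL.2 t (hsubL h)
        · rw [hEM h]; exact hγn.2 t h
        · rw [hER h]; exact hδR.2 t (hsubR h)
      · show (if (0:ℝ) < -a then δL 0 else if (0:ℝ) ≤ a then γn 0 else δR 0) = z0
        rw [if_neg (by linarith : ¬ (0:ℝ) < -a), if_pos ha0, hγn0]
  choose Φ hΦ using main
  have hcons : ∀ m n : ℕ, m ≤ n →
      Set.EqOn (Φ m) (Φ n) (Set.Icc (-((m:ℝ) * η)) ((m:ℝ) * η)) := by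
    intro m n hmn
    have hsub : Set.Icc (-((m:ℝ) * η)) ((m:ℝ) * η) ⊆ Set.Icc (-((n:ℝ) * η)) ((n:ℝ) * η) := by
      have : (m:ℝ) * η ≤ (n:ℝ) * η :=
        mul_le_mul_of_nonneg_right (Nat.cast_le.2 hmn) hη0.le
      exact Set.Icc_subset_Icc (by linarith) this
    have h0m : (0:ℝ) ∈ Set.Icc (-((m:ℝ) * η)) ((m:ℝ) * η) :=
      ⟨neg_nonpos.2 (by positivity), by positivity⟩
    exact lift_unique A isPreconnected_Icc (hΦ m).1 ((hΦ n).1.mono hsub) h0m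
      ((hΦ m).2.trans (hΦ n).2.symm)
  have hmemIcc : ∀ t : ℝ, t ∈ Set.Icc (-((⌈|t| / η⌉₊ : ℝ) * η)) ((⌈|t| / η⌉₊ : ℝ) * η) := by
    intro t
    have h1 : |t| / η ≤ (⌈|t| / η⌉₊ : ℝ) := Nat.le_ceil _
    have h2 : |t| ≤ (⌈|t| / η⌉₊ : ℝ) * η := by rwa [div_le_iff₀ hη0] at h1
    exact ⟨(abs_le.1 h2).1, (abs_le.1 h2).2⟩
  set Γ : ℝ → ℂ := fun t => Φ ⌈|t| / η⌉₊ t with hΓdef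
  have hΓeq : ∀ n : ℕ, ∀ t ∈ Set.Icc (-((n:ℝ) * η)) ((n:ℝ) * η), Γ t = Φ n t := by
    intro n t ht
    have habs : |t| ≤ (n:ℝ) * η := abs_le.2 ⟨by linarith [ht.1], ht.2⟩
    have hle : ⌈|t| / η⌉₊ ≤ n := Nat.ceil_le.2 ((div_le_iff₀ hη0).2 (by
      calc |t| ≤ (n:ℝ) * η := habs
        _ = (n:ℝ) * η := rfl))
    exact hcons _ n hle (hmemIcc t)
  have hcont : Continuous Γ := by
    rw [continuous_iff_continuousAt]
    intro t0
    set n : ℕ := ⌈|t0| / η⌉₊ + 1 with hn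
    have habs : |t0| ≤ (⌈|t0| / η⌉₊ : ℝ) * η := by
      have h1 : |t0| / η ≤ (⌈|t0| / η⌉₊ : ℝ) := Nat.le_ceil _
      rwa [div_le_iff₀ hη0] at h1
    have habs' : |t0| < (n:ℝ) * η := by
      push_cast [hn]
      nlinarith
    have hnbd : Set.Icc (-((n:ℝ) * η)) ((n:ℝ) * η) ∈ nhds t0 :=
      Icc_mem_nhds (by linarith [abs_lt.1 habs'] ) (abs_lt.1 habs').2
    have hΓΦ : Γ =ᶠ[nhds t0] Φ n := by
      filter_upwards [hnbd] with t ht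
      exact hΓeq n t ht
    exact ((hΦ n).1.1.continuousAt hnbd).congr hΓΦ.symm
  refine ⟨Γ, hcont, ?_, ?_⟩
  · show Φ ⌈|(0:ℝ)| / η⌉₊ 0 = z0
    exact (hΦ _).2
  · intro t
    exact (hΦ _).1.2 t (hmemIcc t)


/-- A global lift. -/
def IsLift (f : ℂ → ℂ) (lam : Set ℂ) (w : ℂ) (γ : ℝ → ℂ) : Prop :=
  Continuous γ ∧ ∀ t, γ t ∈ lam ∧ f (γ t) = w * Complex.exp (Complex.I * t)

lemma IsLift.isLiftOn {w : ℂ} {γ : ℝ → ℂ} (h : IsLift f lam w γ) (s : Set ℝ) :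
    IsLiftOn f lam w γ s :=
  ⟨h.1.continuousOn, fun t _ => h.2 t⟩

lemma contDiff_circ (w : ℂ) : ContDiff ℝ ⊤ (fun t : ℝ => w * Complex.exp (Complex.I * t)) := by
  have hexp : ContDiff ℝ ⊤ Complex.exp := Complex.contDiff_exp
  apply ContDiff.mul contDiff_const
  apply hexp.comp
  exact ContDiff.mul contDiff_const Complex.ofRealCLM.contDiff

lemma hasDerivAt_circ (w : ℂ) (t0 : ℝ) :
    HasDerivAt (fun t : ℝ => w * Complex.exp (Complex.I * t))
      (w * (Complex.I * Complex.exp (Complex.I * t0))) t0 := by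
  have h1 : HasDerivAt (fun z : ℂ => w * Complex.exp (Complex.I * z))
      (w * (Complex.I * Complex.exp (Complex.I * (t0 : ℂ)))) (t0 : ℂ) := by
    have hinner : HasDerivAt (fun z : ℂ => Complex.I * z) Complex.I (t0 : ℂ) := by
      simpa using (hasDerivAt_id (t0 : ℂ)).const_mul Complex.I
    have h2 : HasDerivAt Complex.exp (Complex.exp (Complex.I * (t0:ℂ))) (Complex.I * (t0:ℂ)) :=
      Complex.hasDerivAt_exp _
    have h3 := HasDerivAt.comp (t0 : ℂ) h2 hinner
    have h4 := h3.const_mul w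
    simpa [Function.comp, mul_comm, mul_assoc, mul_left_comm] using h4
  exact h1.comp_ofReal

lemma lift_eventuallyEq (A : Atlas f G lam) {w : ℂ} {γ : ℝ → ℂ} (hγ : IsLift f lam w γ)
    (t0 : ℝ) :
    ∃ i, (∀ᶠ t in nhds t0, γ t = (A.C i).g (w * Complex.exp (Complex.I * t)))
      ∧ w * Complex.exp (Complex.I * t0) ∈ (A.C i).V := by
  obtain ⟨i, hiW⟩ := A.mem_chart (hγ.2 t0).1
  have hfp : f (γ t0) = w * Complex.exp (Complex.I * t0) := (hγ.2 t0).2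
  have hV : w * Complex.exp (Complex.I * t0) ∈ (A.C i).V := by
    apply A.ball_sub i
    rw [← hfp]
    exact Metric.ball_subset_ball (by linarith [(A.rpos i)]) hiW.2
  refine ⟨i, ?_, hV⟩
  have hUev : ∀ᶠ t in nhds t0, γ t ∈ (A.C i).U :=
    hγ.1.continuousAt ((A.C i).openU.mem_nhds hiW.1)
  filter_upwards [hUev] with t ht
  rw [← (hγ.2 t).2]
  exact ((A.C i).left_inv _ ht).symm

lemma lift_deriv (A : Atlas f G lam) {w : ℂ} (hw : w ≠ 0) {γ : ℝ → ℂ}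
    (hγ : IsLift f lam w γ) (t0 : ℝ) :
    (∃ d : ℂ, d ≠ 0 ∧ HasDerivAt γ d t0) ∧ ContDiffAt ℝ 1 γ t0 := by
  obtain ⟨i, hev, hV⟩ := lift_eventuallyEq A hγ t0
  set v0 : ℂ := w * Complex.exp (Complex.I * t0) with hv0
  have hganal : AnalyticAt ℂ (A.C i).g v0 := (A.C i).anal _ hV
  have hgd : HasDerivAt (A.C i).g (deriv (A.C i).g v0) v0 :=
    hganal.differentiableAt.hasDerivAt
  have hgd0 : deriv (A.C i).g v0 ≠ 0 := (A.C i).dg _ hV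
  have hc := hasDerivAt_circ w t0
  have hcomp := HasDerivAt.scomp (x := t0) hgd hc
  constructor
  · refine ⟨(w * (Complex.I * Complex.exp (Complex.I * t0))) • deriv (A.C i).g v0, ?_, ?_⟩
    · simp only [smul_eq_mul]
      exact mul_ne_zero (mul_ne_zero hw (mul_ne_zero Complex.I_ne_zero
        (Complex.exp_ne_zero _))) hgd0
    · exact hcomp.congr_of_eventuallyEq (by filter_upwards [hev] with t ht; exact ht)
  · have hsm : ContDiffAt ℝ 1 (fun t : ℝ => (A.C i).g (w * Complex.exp (Complex.I * t))) t0 := by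
      have hg1 : ContDiffAt ℝ 1 (A.C i).g v0 :=
        (hganal.contDiffAt.restrict_scalars ℝ).of_le le_top
      exact hg1.comp t0 ((contDiff_circ w).contDiffAt.of_le le_top)
    exact hsm.congr_of_eventuallyEq hev


lemma fiber_finite (A : Atlas f G lam) (w : ℂ) : Set.Finite {z ∈ lam | f z = w} := by
  have hsub : {z ∈ lam | f z = w} ⊆ ⋃ i, (A.W i ∩ {z ∈ lam | f z = w}) := by
    intro z hz
    obtain ⟨i, hi⟩ := A.mem_chart hz.1
    exact Set.mem_iUnion.2 ⟨i, hi, hz⟩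
  refine Set.Finite.subset (Set.finite_iUnion fun i => ?_) hsub
  apply Set.Subsingleton.finite
  intro z hz z' hz'
  have e1 : (A.C i).g (f z) = z := (A.C i).left_inv _ hz.1.1
  have e2 : (A.C i).g (f z') = z' := (A.C i).left_inv _ hz'.1.1
  rw [← e1, ← e2, hz.2.2, hz'.2.2]

lemma range_mem_nhds (A : Atlas f G lam) {ε : ℝ} (hε : 0 < ε)
    (hlam : lam = {z ∈ G | ‖f z‖ = ε}) (hf : AnalyticOnNhd ℂ f G)
    {w : ℂ} {γ : ℝ → ℂ} (hγ : IsLift f lam w γ) (t0 : ℝ) :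
    ∀ᶠ z in nhds (γ t0), z ∈ lam → z ∈ Set.range γ := by
  set p := γ t0 with hp
  have hplam : p ∈ lam := (hγ.2 t0).1
  have hpG : p ∈ G := by rw [hlam] at hplam; exact hplam.1
  have hpε : ‖f p‖ = ε := by rw [hlam] at hplam; exact hplam.2
  have hfp0 : f p ≠ 0 := by
    intro h
    rw [h] at hpε
    simp at hpε
    exact hε.ne' hpε.symm
  obtain ⟨i, hiW⟩ := A.mem_chart hplam
  set φ : ℂ → ℝ := fun z => t0 + Complex.arg (f z / f p) with hφ
  have hφpeq : φ p = t0 := by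
    rw [hφ]
    simp [div_self hfp0, Complex.arg_one]
  have hfcont : ContinuousAt f p := (hf p hpG).continuousAt
  have hφcont : ContinuousAt φ p := by
    apply continuousAt_const.add
    have hdiv : ContinuousAt (fun z => f z / f p) p := hfcont.div continuousAt_const hfp0
    have harg : ContinuousAt Complex.arg (f p / f p) := by
      rw [div_self hfp0]
      apply Complex.continuousAt_arg
      simp [Complex.slitPlane]
    exact ContinuousAt.comp (x := p) harg hdiv
  have hψcont : ContinuousAt (fun z => γ (φ z)) p :=
    (hγ.1.continuousAt).comp hφcont
  have hψp : γ (φ p) = p := by rw [hφpeq]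
  have hev1 : ∀ᶠ z in nhds p, z ∈ (A.C i).U := by
    filter_upwards [(A.C i).openU.mem_nhds hiW.1] with z hz using hz
  have hev2 : ∀ᶠ z in nhds p, γ (φ z) ∈ (A.C i).U := by
    have := hψcont.preimage_mem_nhds ((A.C i).openU.mem_nhds (by rw [hψp]; exact hiW.1))
    filter_upwards [this] with z hz using hz
  filter_upwards [hev1, hev2] with z hz1 hz2 hzlam
  have hnz : ‖f z‖ = ε := by rw [hlam] at hzlam; exact hzlam.2
  set u : ℂ := f z / f p with hu
  have hu1 : ‖u‖ = 1 := by
    rw [hu, norm_div]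
    rw [hnz, hpε]
    exact div_self hε.ne'
  have huexp : Complex.exp (Complex.I * Complex.arg u) = u := by
    have h := Complex.norm_mul_exp_arg_mul_I u
    rw [hu1] at h
    rw [mul_comm]
    simpa using h
  have hfψ : f (γ (φ z)) = f z := by
    rw [(hγ.2 (φ z)).2]
    have hsplit : Complex.exp (Complex.I * ((t0 + Complex.arg u : ℝ) : ℂ))
        = Complex.exp (Complex.I * t0) * Complex.exp (Complex.I * Complex.arg u) := by
      rw [← Complex.exp_add]
      congr 1
      push_cast
      ring
    have hwfp : w * Complex.exp (Complex.I * t0) = f p := (hγ.2 t0).2.symm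
    calc w * Complex.exp (Complex.I * ((t0 + Complex.arg u : ℝ) : ℂ))
        = w * Complex.exp (Complex.I * t0) * Complex.exp (Complex.I * Complex.arg u) := by
          rw [hsplit]; ring
      _ = f p * u := by rw [hwfp, huexp]
      _ = f z := by rw [hu]; field_simp
  have e1 : (A.C i).g (f (γ (φ z))) = γ (φ z) := (A.C i).left_inv _ hz2
  have e2 : (A.C i).g (f z) = z := (A.C i).left_inv _ hz1
  refine ⟨φ z, ?_⟩
  calc γ (φ z) = (A.C i).g (f (γ (φ z))) := e1.symm
    _ = (A.C i).g (f z) := by rw [hfψ]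
    _ = z := e2


lemma lift_unique' (A : Atlas f G lam) {w : ℂ} {γ1 γ2 : ℝ → ℂ}
    (h1 : IsLift f lam w γ1) (h2 : IsLift f lam w γ2) (h0 : γ1 0 = γ2 0) : γ1 = γ2 :=
  funext fun t => lift_unique A isPreconnected_univ (h1.isLiftOn _) (h2.isLiftOn _)
    (Set.mem_univ 0) h0 (Set.mem_univ t)

lemma lift_shift {w : ℂ} {γ : ℝ → ℂ} (hγ : IsLift f lam w γ) (s : ℝ) :
    IsLift f lam (w * Complex.exp (Complex.I * s)) (fun t => γ (s + t)) := by
  refine ⟨hγ.1.comp (continuous_const.add continuous_id), fun t => ⟨(hγ.2 _).1, ?_⟩⟩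
  rw [(hγ.2 (s + t)).2, mul_assoc, ← Complex.exp_add]
  congr 2
  push_cast
  ring

lemma lift_shift_eq (A : Atlas f G lam) {w : ℂ} {γ : ℝ → ℂ} (hγ : IsLift f lam w γ)
    {s s' : ℝ} (hgs : γ s = γ s')
    (hexp : Complex.exp (Complex.I * s) = Complex.exp (Complex.I * s')) :
    ∀ t, γ (s + t) = γ (s' + t) := by
  have h1 := lift_shift hγ s
  have h2 := lift_shift hγ s'
  rw [hexp] at h1
  have h0 : (fun t => γ (s + t)) 0 = (fun t => γ (s' + t)) 0 := by simpa using hgs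
  have hh := lift_unique' A h1 h2 h0
  intro t
  exact congrFun hh t

lemma exp_I_eq_one {x : ℝ} {k : ℤ} (hx : x = 2 * Real.pi * k) :
    Complex.exp (Complex.I * (x : ℂ)) = 1 := by
  subst hx
  rw [show (Complex.I * ((2 * Real.pi * k : ℝ) : ℂ)) = (k : ℂ) * (2 * Real.pi * Complex.I) by
    push_cast; ring]
  exact Complex.exp_int_mul_two_pi_mul_I k

lemma exists_curve (A : Atlas f G lam) {ε : ℝ} (hε : 0 < ε)
    (hlam : lam = {z ∈ G | ‖f z‖ = ε}) {w : ℂ} {g : ℝ → ℂ} (hg : IsLift f lam w g) :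
    ∃ γ : ℝ → ℂ, ContDiff ℝ 1 γ ∧ Function.Periodic γ (2 * Real.pi) ∧
      Set.InjOn γ (Set.Ico 0 (2 * Real.pi)) ∧ (∀ t, deriv γ t ≠ 0) ∧
      Set.range γ = Set.range g := by
  classical
  have hπ : 0 < Real.pi := Real.pi_pos
  have hw0 : w ≠ 0 := by
    have h1 : f (g 0) = w * Complex.exp (Complex.I * (0:ℝ)) := (hg.2 0).2
    have h2 : ‖f (g 0)‖ = ε := by
      have := (hg.2 0).1
      rw [hlam] at this
      exact this.2
    intro h
    rw [h, zero_mul] at h1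
    rw [h1] at h2
    simp at h2
    exact hε.ne' h2.symm
  -- the fiber over w is finite
  have hfib : ∀ k : ℕ, g (2 * Real.pi * k) ∈ {z ∈ lam | f z = w} := by
    intro k
    refine ⟨(hg.2 _).1, ?_⟩
    rw [(hg.2 _).2, exp_I_eq_one (x := 2*Real.pi*(k:ℝ)) (k := (k:ℤ)) (by push_cast; ring), mul_one]
  haveI hfin : Finite {z ∈ lam | f z = w} := (fiber_finite A w).to_subtype
  obtain ⟨a, b, hab, heqv⟩ := Finite.exists_ne_map_eq_of_infinite
    (fun k : ℕ => (⟨g (2 * Real.pi * k), hfib k⟩ : {z ∈ lam | f z = w}))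
  have heqv' : g (2 * Real.pi * a) = g (2 * Real.pi * b) := by
    simpa using congrArg Subtype.val heqv
  -- a period exists
  have hMne : ∃ m : ℕ, 0 < m ∧ g (2 * Real.pi * m) = g 0 := by
    rcases hab.lt_or_gt with h | h
    · refine ⟨b - a, Nat.sub_pos_of_lt h, ?_⟩
      have hsh := lift_shift_eq A hg heqv'
        (by rw [exp_I_eq_one (x := 2*Real.pi*(a:ℝ)) (k := (a:ℤ)) (by push_cast; ring),
          exp_I_eq_one (x := 2*Real.pi*(b:ℝ)) (k := (b:ℤ)) (by push_cast; ring)])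
        (-(2 * Real.pi * a))
      rw [show 2*Real.pi*(a:ℝ) + -(2*Real.pi*a) = 0 by ring] at hsh
      rw [show 2*Real.pi*(b:ℝ) + -(2*Real.pi*a) = 2*Real.pi*((b:ℝ)-a) by ring] at hsh
      rw [Nat.cast_sub h.le]
      exact hsh.symm
    · refine ⟨a - b, Nat.sub_pos_of_lt h, ?_⟩
      have hsh := lift_shift_eq A hg heqv'.symm
        (by rw [exp_I_eq_one (x := 2*Real.pi*(b:ℝ)) (k := (b:ℤ)) (by push_cast; ring),
          exp_I_eq_one (x := 2*Real.pi*(a:ℝ)) (k := (a:ℤ)) (by push_cast; ring)])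
        (-(2 * Real.pi * b))
      rw [show 2*Real.pi*(b:ℝ) + -(2*Real.pi*b) = 0 by ring] at hsh
      rw [show 2*Real.pi*(a:ℝ) + -(2*Real.pi*b) = 2*Real.pi*((a:ℝ)-b) by ring] at hsh
      rw [Nat.cast_sub h.le]
      exact hsh.symm
  set m : ℕ := Nat.find hMne with hmdef
  have hm : 0 < m ∧ g (2 * Real.pi * m) = g 0 := Nat.find_spec hMne
  have hmR : (0:ℝ) < m := by exact_mod_cast hm.1
  -- periodicity with period 2πm
  have hgper : ∀ t, g (t + 2 * Real.pi * m) = g t := by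
    intro t
    have := lift_shift_eq A hg hm.2.symm
      (by rw [exp_I_eq_one (x := (0:ℝ)) (k := 0) (by norm_num),
        exp_I_eq_one (x := 2*Real.pi*(m:ℝ)) (k := (m:ℤ)) (by push_cast; ring)]) t
    rw [show (0:ℝ) + t = t by ring] at this
    rw [show 2 * Real.pi * (m:ℝ) + t = t + 2 * Real.pi * m by ring] at this
    exact this.symm
  -- no smaller period among multiples of 2π : injectivity
  have hkey : ∀ (u v : ℝ) (j : ℤ), 0 < j → 0 ≤ u → v < 2 * Real.pi * m →
      v = u + 2 * Real.pi * j → g u = g v → False := by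
    intro u v j hj hu hv hvu hguv
    have hjm : j < (m:ℤ) := by
      have h2 : 2 * Real.pi * (j:ℝ) ≤ v := by
        rw [hvu]
        linarith
      have : 2 * Real.pi * (j:ℝ) < 2 * Real.pi * m := lt_of_le_of_lt h2 hv
      have := lt_of_mul_lt_mul_left this (by positivity : (0:ℝ) ≤ 2 * Real.pi)
      exact_mod_cast this
    have hguv' : g u = g (u + 2 * Real.pi * j) := hvu ▸ hguv
    have hper2 := lift_shift_eq A hg hguv'
      (by
        rw [show ((u + 2 * Real.pi * (j:ℝ) : ℝ):ℂ) = ((u:ℝ):ℂ) + ((2 * Real.pi * (j:ℝ) : ℝ):ℂ) by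
          push_cast; ring]
        rw [mul_add, Complex.exp_add,
          exp_I_eq_one (x := 2*Real.pi*(j:ℝ)) (k := j) (by push_cast; ring), mul_one]) (-u)
    have h0 : g 0 = g (2 * Real.pi * j) := by
      have h1 := hper2
      rw [show u + -u = 0 by ring] at h1
      rw [show u + 2 * Real.pi * (j:ℝ) + -u = 2 * Real.pi * (j:ℝ) by ring] at h1
      exact h1
    have hjnat : j.toNat < m := by omega
    have hjpos : 0 < j.toNat := by omega
    refine Nat.find_min hMne hjnat ⟨hjpos, ?_⟩
    have hc : ((j.toNat : ℕ) : ℝ) = (j : ℝ) := by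
      exact_mod_cast congrArg (Int.cast : ℤ → ℝ) (Int.toNat_of_nonneg hj.le)
    rw [hc]
    exact h0.symm
  -- injectivity on the fundamental period interval
  have hinj : Set.InjOn g (Set.Ico 0 (2 * Real.pi * m)) := by
    intro s hs t ht hgst
    have hfeq : Complex.exp (Complex.I * s) = Complex.exp (Complex.I * t) := by
      have h1 := (hg.2 s).2
      have h2 := (hg.2 t).2
      rw [hgst] at h1
      exact mul_left_cancel₀ hw0 (h1.symm.trans h2)
    obtain ⟨k, hk⟩ := Complex.exp_eq_exp_iff_exists_int.1 hfeq
    have hk' : s = t + 2 * Real.pi * k := by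
      have hC : (s:ℂ) = ((t + 2 * Real.pi * (k:ℝ) : ℝ):ℂ) := by
        apply mul_left_cancel₀ Complex.I_ne_zero
        rw [hk]
        push_cast
        ring
      exact_mod_cast hC
    rcases lt_trichotomy k 0 with hkneg | hk0 | hkpos
    · exfalso
      exact hkey s t (-k) (by omega) hs.1 ht.2
        (by push_cast; linarith [hk']) hgst
    · rw [hk0] at hk'
      simpa using hk'
    · exfalso
      exact hkey t s k hkpos ht.1 hs.2 hk' hgst.symm
  -- package the final curve
  refine ⟨fun t => g ((m:ℝ) * t), ?_, ?_, ?_, ?_, ?_⟩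
  · -- ContDiff
    have hgC1 : ContDiff ℝ 1 g := contDiff_iff_contDiffAt.2 fun t =>
      (lift_deriv A hw0 hg t).2
    exact hgC1.comp (contDiff_const.mul contDiff_id)
  · -- periodic
    intro t
    show g ((m:ℝ) * (t + 2 * Real.pi)) = g ((m:ℝ) * t)
    rw [show (m:ℝ) * (t + 2 * Real.pi) = (m:ℝ) * t + 2 * Real.pi * m by ring]
    exact hgper _
  · -- injective
    intro s hs t ht h
    have h1 : (m:ℝ) * s ∈ Set.Ico 0 (2 * Real.pi * m) := by
      constructor
      · exact mul_nonneg hmR.le hs.1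
      · rw [show 2 * Real.pi * (m:ℝ) = (m:ℝ) * (2 * Real.pi) by ring]
        exact mul_lt_mul_of_pos_left hs.2 hmR
    have h2 : (m:ℝ) * t ∈ Set.Ico 0 (2 * Real.pi * m) := by
      constructor
      · exact mul_nonneg hmR.le ht.1
      · rw [show 2 * Real.pi * (m:ℝ) = (m:ℝ) * (2 * Real.pi) by ring]
        exact mul_lt_mul_of_pos_left ht.2 hmR
    have := hinj h1 h2 h
    exact mul_left_cancel₀ hmR.ne' this
  · -- nonvanishing derivative
    intro t
    obtain ⟨⟨d, hd0, hdAt⟩, -⟩ := lift_deriv A hw0 hg ((m:ℝ) * t)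
    have hin : HasDerivAt (fun t : ℝ => (m:ℝ) * t) (m:ℝ) t := by
      simpa using (hasDerivAt_id t).const_mul (m:ℝ)
    have hcomp := HasDerivAt.scomp (x := t) hdAt hin
    have : deriv (fun t => g ((m:ℝ) * t)) t = (m:ℝ) • d := by
      have h := hcomp.deriv
      rw [← h]
      rfl
    rw [this]
    exact smul_ne_zero hmR.ne' hd0
  · -- range
    ext x
    constructor
    · rintro ⟨t, ht⟩
      exact ⟨(m:ℝ) * t, ht⟩
    · rintro ⟨t, ht⟩
      refine ⟨t / m, ?_⟩
      show g ((m:ℝ) * (t / m)) = x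
      rw [show (m:ℝ) * (t / m) = t by field_simp]
      exact ht

end RegLevelAux


open RegLevelAux in
theorem regular_level_set_is_finite_union_of_smooth_jordan_curves
    (f : ℂ → ℂ) (G : Set ℂ) (hG : IsOpen G) (hGconn : IsConnected G)
    (hf : AnalyticOnNhd ℂ f G) (hnc : ¬ ∃ c : ℂ, Set.EqOn f (fun _ => c) G)
    (ε : ℝ) (hε : 0 < ε)
    (lam : Set ℂ) (hlam : lam = {z ∈ G | ‖f z‖ = ε}) (hcpt : IsCompact lam)
    (hfaces : ∀ z : ℂ, z ∉ lam → Bornology.IsBounded (connectedComponentIn lamᶜ z) →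
      connectedComponentIn lamᶜ z ⊆ G)
    (hreg : ∀ z ∈ lam, deriv f z ≠ 0) :
    ∃ (n : ℕ) (L : Fin n → Set ℂ),
      (⋃ i, L i) = lam ∧
      (Pairwise fun i j => Disjoint (L i) (L j)) ∧
      ∀ i, ∃ γ : ℝ → ℂ, ContDiff ℝ 1 γ ∧ Function.Periodic γ (2 * Real.pi) ∧
        Set.InjOn γ (Set.Ico 0 (2 * Real.pi)) ∧ (∀ t, deriv γ t ≠ 0) ∧
        Set.range γ = L i := by
  classical
  have hsub : lam ⊆ G := by rw [hlam]; exact fun z hz => hz.1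
  obtain ⟨A⟩ := exists_atlas hG hf hsub hcpt hreg
  have hchoice : ∀ z : lam, ∃ γ : ℝ → ℂ, Continuous γ ∧ γ 0 = (z:ℂ) ∧
      ∀ t, γ t ∈ lam ∧ f (γ t) = f (z:ℂ) * Complex.exp (Complex.I * t) :=
    fun z => lift_exists A hε hlam z.2
  choose Γ hΓc hΓ0 hΓp using hchoice
  have hΓlift : ∀ z : lam, IsLift f lam (f (z:ℂ)) (Γ z) := fun z => ⟨hΓc z, hΓp z⟩
  have hrsub : ∀ z : lam, Set.range (Γ z) ⊆ lam := by
    rintro z x ⟨t, ht⟩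
    rw [← ht]
    exact (hΓp z t).1
  have hrange : ∀ (z z' : lam), (z' : ℂ) ∈ Set.range (Γ z) →
      Set.range (Γ z') = Set.range (Γ z) := by
    intro z z' hz'
    obtain ⟨s, hs⟩ := hz'
    have hfz' : f (z' : ℂ) = f (z:ℂ) * Complex.exp (Complex.I * s) := by
      rw [← hs]
      exact (hΓp z s).2
    have h1 : IsLift f lam (f (z':ℂ)) (fun t => Γ z (s + t)) := by
      rw [hfz']
      exact lift_shift (hΓlift z) s
    have h0 : Γ z' 0 = (fun t => Γ z (s + t)) 0 := by
      rw [hΓ0 z']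
      simp [hs]
    have heq := lift_unique' A (hΓlift z') h1 h0
    rw [heq]
    ext x
    constructor
    · rintro ⟨t, ht⟩
      exact ⟨s + t, ht⟩
    · rintro ⟨t, ht⟩
      refine ⟨t - s, ?_⟩
      show Γ z (s + (t - s)) = x
      rw [show s + (t - s) = t by ring]
      exact ht
  have hball : ∀ z : lam, ∃ ρ > 0, ∀ ⦃x⦄, dist x (z:ℂ) < ρ → x ∈ lam → x ∈ Set.range (Γ z) := by
    intro z
    have h := range_mem_nhds A hε hlam hf (hΓlift z) 0
    rw [hΓ0 z] at h
    exact Metric.eventually_nhds_iff.1 h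
  choose ρ hρpos hρ using hball
  have hcov : lam ⊆ ⋃ z : lam, Metric.ball (z:ℂ) (ρ z) := fun x hx =>
    Set.mem_iUnion.2 ⟨⟨x, hx⟩, Metric.mem_ball_self (hρpos _)⟩
  obtain ⟨T, hT⟩ := hcpt.elim_finite_subcover _ (fun z : lam => Metric.isOpen_ball) hcov
  set R : Set (Set ℂ) := (fun z : lam => Set.range (Γ z)) '' (T : Set lam) with hRdef
  have hRfin : R.Finite := T.finite_toSet.image _
  have hRmem : ∀ z : lam, Set.range (Γ z) ∈ R := by
    intro z
    have hzcov := hT z.2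
    simp only [Set.mem_iUnion, exists_prop] at hzcov
    obtain ⟨y, hyT, hyball⟩ := hzcov
    have hz_in : (z:ℂ) ∈ Set.range (Γ y) :=
      hρ y (by rwa [Metric.mem_ball] at hyball) z.2
    rw [hrange y z hz_in]
    exact ⟨y, hyT, rfl⟩
  have hlamU : ⋃₀ R = lam := by
    apply Set.Subset.antisymm
    · rintro x ⟨C, ⟨y, _, rfl⟩, hx⟩
      exact hrsub y hx
    · intro x hx
      exact ⟨Set.range (Γ ⟨x, hx⟩), hRmem ⟨x, hx⟩, ⟨0, hΓ0 _⟩⟩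
  -- sharing a point forces equality of members of R
  have hRshare : ∀ C ∈ R, ∀ C' ∈ R, (C ∩ C').Nonempty → C = C' := by
    rintro C ⟨y, -, rfl⟩ C' ⟨y', -, rfl⟩ ⟨x, hx1, hx2⟩
    have hxlam : x ∈ lam := hrsub y hx1
    have e1 := hrange y ⟨x, hxlam⟩ hx1
    have e2 := hrange y' ⟨x, hxlam⟩ hx2
    show Set.range (Γ y) = Set.range (Γ y')
    rw [← e1, ← e2]
  haveI : Fintype R := hRfin.fintype
  set e := Fintype.equivFin R with hedef
  refine ⟨Fintype.card R, fun i => ((e.symm i : R) : Set ℂ), ?_, ?_, ?_⟩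
  · apply Set.Subset.antisymm
    · intro x hx
      obtain ⟨i, hi⟩ := Set.mem_iUnion.1 hx
      rw [← hlamU]
      exact ⟨_, (e.symm i).2, hi⟩
    · intro x hx
      rw [← hlamU] at hx
      obtain ⟨C, hC, hxC⟩ := hx
      refine Set.mem_iUnion.2 ⟨e ⟨C, hC⟩, ?_⟩
      rw [show ((e.symm (e ⟨C, hC⟩) : R) : Set ℂ) = C by rw [Equiv.symm_apply_apply]]
      exact hxC
  · intro i j hij
    rw [Set.disjoint_iff_inter_eq_empty]
    by_contra hne
    have hnonempty : (((e.symm i : R) : Set ℂ) ∩ ((e.symm j : R) : Set ℂ)).Nonempty :=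
      Set.nonempty_iff_ne_empty.2 hne
    have := hRshare _ (e.symm i).2 _ (e.symm j).2 hnonempty
    have hsame : (e.symm i : R) = (e.symm j : R) := Subtype.ext this
    exact hij (by rw [← Equiv.apply_symm_apply e i, ← Equiv.apply_symm_apply e j, hsame])
  · intro i
    obtain ⟨y, -, hy⟩ := (e.symm i).2
    simp only []
    rw [← hy]
    exact exists_curve A hε hlam (hΓlift y)
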